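/- arXiv:math/0209329 — 2 statements merged into one kernel-verified Lean document; each statement's English description precedes it below -/
import Mathlib

section
/- Let dμ be a measure on ℝ of infinite support with all moments finite, p_n its orthonormal polynomials with recursion x p_n(x) = a_{n+1} p_{n+1}(x) + b_{n+1} p_n(x) + a_n p_{n-1}(x), and K_n(x,y) = Σ_{j=0}^n p_j(x) p_j(y). Then for every real x and n, K_n(x,x) · dist(x, supp dμ)² ≤ a_{n+1}² (p_{n+1}(x)² + p_n(x)²). -/
open MeasureTheory Polynomial

def measSupport (μ : Measure ℝ) : Set ℝ :=
  {x | ∀ ε > 0, 0 < μ (Metric.ball x ε)}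

lemma integrable_eval_aux (μ : Measure ℝ)
    (hmom : ∀ n : ℕ, Integrable (fun x : ℝ => |x| ^ n) μ) (q : Polynomial ℝ) :
    Integrable (fun y : ℝ => q.eval y) μ := by
  have h : ∀ i : ℕ, Integrable (fun y : ℝ => q.coeff i * y ^ i) μ := by
    intro i
    refine Integrable.const_mul ?_ _
    refine (hmom i).mono' ((continuous_pow i).aestronglyMeasurable) ?_
    filter_upwards with y
    rw [Real.norm_eq_abs, abs_pow]
  have he : (fun y : ℝ => q.eval y)
      = fun y => ∑ i ∈ Finset.range (q.natDegree + 1), q.coeff i * y ^ i := by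
    funext y
    rw [Polynomial.eval_eq_sum_range]
  rw [he]
  exact integrable_finset_sum _ (fun i _ => h i)

lemma null_compl_measSupport (μ : Measure ℝ) : μ (measSupport μ)ᶜ = 0 := by
  apply measure_null_of_locally_null
  intro y hy
  simp only [measSupport, Set.mem_compl_iff, Set.mem_setOf_eq, not_forall] at hy
  obtain ⟨ε, hε, h⟩ := hy
  exact ⟨Metric.ball y ε, nhdsWithin_le_nhds (Metric.ball_mem_nhds y hε),
    by simpa using (not_lt.mp h)⟩

lemma cd_formula (p : ℕ → Polynomial ℝ) (a b : ℕ → ℝ)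
    (hrec : ∀ k x, x * (p k).eval x
      = a (k + 1) * (p (k + 1)).eval x + b (k + 1) * (p k).eval x
        + (if k = 0 then 0 else a k * (p (k - 1)).eval x)) (x : ℝ) :
    ∀ n y, (y - x) * ∑ k ∈ Finset.range (n + 1), (p k).eval x * (p k).eval y
      = a (n + 1) * ((p (n + 1)).eval y * (p n).eval x - (p n).eval y * (p (n + 1)).eval x) := by
  intro n
  induction n with
  | zero =>
    intro y
    have h0y := hrec 0 y
    have h0x := hrec 0 x
    simp at h0y h0x
    rw [Finset.sum_range_one]
    linear_combination (p 0).eval x * h0y - (p 0).eval y * h0x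
  | succ n ih =>
    intro y
    have h1y := hrec (n + 1) y
    have h1x := hrec (n + 1) x
    simp at h1y h1x
    rw [Finset.sum_range_succ]
    linear_combination ih y + (p (n + 1)).eval x * h1y - (p (n + 1)).eval y * h1x

/-- Lemma 2.2: `K_n(x,x) · dist(x, supp μ)² ≤ a_{n+1}² (p_{n+1}(x)² + p_n(x)²)`. -/
theorem stmt_3 (μ : Measure ℝ)
    (hmom : ∀ n : ℕ, Integrable (fun x : ℝ => |x| ^ n) μ)
    (hinf : (measSupport μ).Infinite)
    (p : ℕ → Polynomial ℝ) (a b : ℕ → ℝ)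
    (ha : ∀ k, 0 < a k)
    (hdeg : ∀ k, (p k).natDegree = k)
    (hlead : ∀ k, 0 < (p k).leadingCoeff)
    (horth : ∀ k m, ∫ x, (p k).eval x * (p m).eval x ∂μ = if k = m then 1 else 0)
    (hrec : ∀ k x, x * (p k).eval x
      = a (k + 1) * (p (k + 1)).eval x + b (k + 1) * (p k).eval x
        + (if k = 0 then 0 else a k * (p (k - 1)).eval x))
    (n : ℕ) (x : ℝ) :
    (∑ k ∈ Finset.range (n + 1), (p k).eval x ^ 2) * Metric.infDist x (measSupport μ) ^ 2
      ≤ a (n + 1) ^ 2 * ((p (n + 1)).eval x ^ 2 + (p n).eval x ^ 2) := by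
  set d := Metric.infDist x (measSupport μ) with hd
  set c : ℕ → ℝ := fun k => (p k).eval x with hc
  set K : ℝ → ℝ := fun y => ∑ k ∈ Finset.range (n + 1), (p k).eval x * (p k).eval y with hK
  have hInt2 : ∀ j k : ℕ, Integrable (fun y => (p j).eval y * (p k).eval y) μ := by
    intro j k
    have := integrable_eval_aux μ hmom (p j * p k)
    simpa [Polynomial.eval_mul] using this
  -- expansion of K^2
  have hexp : ∀ y, (K y) ^ 2 = ∑ j ∈ Finset.range (n + 1), ∑ k ∈ Finset.range (n + 1),
      (c j * c k) * ((p j).eval y * (p k).eval y) := by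
    intro y
    rw [hK, sq, Finset.sum_mul_sum]
    exact Finset.sum_congr rfl fun j _ => Finset.sum_congr rfl fun k _ => by ring
  have hIL : Integrable (fun y => (K y) ^ 2) μ := by
    have : (fun y => (K y) ^ 2) = fun y => ∑ j ∈ Finset.range (n + 1),
        ∑ k ∈ Finset.range (n + 1), (c j * c k) * ((p j).eval y * (p k).eval y) :=
      funext hexp
    rw [this]
    exact integrable_finset_sum _ fun j _ =>
      integrable_finset_sum _ fun k _ => (hInt2 j k).const_mul _
  -- ∫ K^2 = ∑ c_k^2
  have hA : ∫ y, (K y) ^ 2 ∂μ = ∑ k ∈ Finset.range (n + 1), (p k).eval x ^ 2 := by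
    calc ∫ y, (K y) ^ 2 ∂μ
        = ∑ j ∈ Finset.range (n + 1), ∑ k ∈ Finset.range (n + 1),
            (c j * c k) * ∫ y, (p j).eval y * (p k).eval y ∂μ := by
          simp_rw [hexp]
          rw [integral_finset_sum _ (fun j _ => integrable_finset_sum _
            (fun k _ => (hInt2 j k).const_mul _))]
          refine Finset.sum_congr rfl fun j _ => ?_
          rw [integral_finset_sum _ (fun k _ => (hInt2 j k).const_mul _)]
          exact Finset.sum_congr rfl fun k _ => integral_const_mul _ _
      _ = ∑ k ∈ Finset.range (n + 1), (p k).eval x ^ 2 := by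
          refine Finset.sum_congr rfl fun j hj => ?_
          simp_rw [horth]
          simp [mul_ite, Finset.sum_ite_eq, Finset.mem_range.mp hj, hc, sq]
  -- the CD rewrite of (y-x) K y
  have CD := cd_formula p a b hrec x n
  have hexp2 : ∀ y, (a (n+1) * ((p (n+1)).eval y * c n - (p n).eval y * c (n+1))) ^ 2
      = (a (n+1) ^ 2 * c n ^ 2) * ((p (n+1)).eval y * (p (n+1)).eval y)
        - (2 * a (n+1) ^ 2 * c n * c (n+1)) * ((p (n+1)).eval y * (p n).eval y)
        + (a (n+1) ^ 2 * c (n+1) ^ 2) * ((p n).eval y * (p n).eval y) := by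
    intro y; ring
  have hIR : Integrable (fun y => ((y - x) * K y) ^ 2) μ := by
    have heq : (fun y => ((y - x) * K y) ^ 2)
        = fun y => (a (n+1) ^ 2 * c n ^ 2) * ((p (n+1)).eval y * (p (n+1)).eval y)
          - (2 * a (n+1) ^ 2 * c n * c (n+1)) * ((p (n+1)).eval y * (p n).eval y)
          + (a (n+1) ^ 2 * c (n+1) ^ 2) * ((p n).eval y * (p n).eval y) := by
      funext y
      rw [hK, CD y, hexp2 y]
    rw [heq]
    exact (((hInt2 _ _).const_mul _).sub ((hInt2 _ _).const_mul _)).add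
      ((hInt2 _ _).const_mul _)
  -- ∫ ((y-x) K y)^2 = a^2 (c_{n+1}^2 + c_n^2)
  have hB : ∫ y, ((y - x) * K y) ^ 2 ∂μ
      = a (n+1) ^ 2 * (c (n+1) ^ 2 + c n ^ 2) := by
    have heq : (fun y => ((y - x) * K y) ^ 2)
        = fun y => (a (n+1) ^ 2 * c n ^ 2) * ((p (n+1)).eval y * (p (n+1)).eval y)
          - (2 * a (n+1) ^ 2 * c n * c (n+1)) * ((p (n+1)).eval y * (p n).eval y)
          + (a (n+1) ^ 2 * c (n+1) ^ 2) * ((p n).eval y * (p n).eval y) := by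
      funext y
      rw [hK, CD y, hexp2 y]
    rw [heq]
    have i1 : Integrable (fun y => (a (n+1) ^ 2 * c n ^ 2)
        * ((p (n+1)).eval y * (p (n+1)).eval y)) μ := (hInt2 _ _).const_mul _
    have i2 : Integrable (fun y => (2 * a (n+1) ^ 2 * c n * c (n+1))
        * ((p (n+1)).eval y * (p n).eval y)) μ := (hInt2 _ _).const_mul _
    have i3 : Integrable (fun y => (a (n+1) ^ 2 * c (n+1) ^ 2)
        * ((p n).eval y * (p n).eval y)) μ := (hInt2 _ _).const_mul _
    have i12 : Integrable (fun y => (a (n+1) ^ 2 * c n ^ 2)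
        * ((p (n+1)).eval y * (p (n+1)).eval y)
        - (2 * a (n+1) ^ 2 * c n * c (n+1)) * ((p (n+1)).eval y * (p n).eval y)) μ :=
      i1.sub i2
    rw [integral_add i12 i3, integral_sub i1 i2,
      integral_const_mul, integral_const_mul, integral_const_mul, horth, horth, horth]
    simp [Nat.succ_ne_self n]
    ring
  -- a.e. comparison
  have hS : ∀ᵐ y ∂μ, y ∈ measSupport μ := by
    rw [MeasureTheory.ae_iff]
    exact null_compl_measSupport μ
  have hd0 : 0 ≤ d := Metric.infDist_nonneg
  have hae : ∀ᵐ y ∂μ, d ^ 2 * (K y) ^ 2 ≤ ((y - x) * K y) ^ 2 := by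
    filter_upwards [hS] with y hy
    have h1 : d ≤ |x - y| := by
      simpa [Real.dist_eq] using Metric.infDist_le_dist_of_mem hy
    have h2 : d ^ 2 ≤ (y - x) ^ 2 := by
      nlinarith [abs_nonneg (x - y), sq_abs (x - y)]
    calc d ^ 2 * (K y) ^ 2 ≤ (y - x) ^ 2 * (K y) ^ 2 :=
          mul_le_mul_of_nonneg_right h2 (sq_nonneg _)
      _ = ((y - x) * K y) ^ 2 := (mul_pow _ _ _).symm
  calc (∑ k ∈ Finset.range (n + 1), (p k).eval x ^ 2) * d ^ 2
      = d ^ 2 * ∫ y, (K y) ^ 2 ∂μ := by rw [hA]; ring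
    _ = ∫ y, d ^ 2 * (K y) ^ 2 ∂μ := (integral_const_mul _ _).symm
    _ ≤ ∫ y, ((y - x) * K y) ^ 2 ∂μ := integral_mono_ae (hIL.const_mul _) hIR hae
    _ = a (n+1) ^ 2 * (c (n+1) ^ 2 + c n ^ 2) := hB
    _ = a (n + 1) ^ 2 * ((p (n + 1)).eval x ^ 2 + (p n).eval x ^ 2) := rfl
end

section
/- Let dμ be a measure on ℝ with compact infinite support, p_n its orthonormal polynomials with Jacobi coefficients a_n, and let x₀ ∉ supp(dμ) with d = dist(x₀, supp dμ) > 0. Set δ_n = d²/(d + √2·a_{n+1}). Then at least one of p_n, p_{n+1} has no zeros in the interval (x₀ − δ_n, x₀ + δ_n). -/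
open MeasureTheory Polynomial

private lemma measSupport_ae (μ : Measure ℝ) : ∀ᵐ x ∂μ, x ∈ measSupport μ := by
  have h : μ (measSupport μ)ᶜ = 0 := by
    apply measure_null_of_locally_null
    intro x hx
    simp only [measSupport, Set.mem_compl_iff, Set.mem_setOf_eq, not_forall] at hx
    obtain ⟨ε, hε, hμ⟩ := hx
    exact ⟨Metric.ball x ε, mem_nhdsWithin_of_mem_nhds (Metric.ball_mem_nhds x hε),
      le_antisymm (not_lt.1 hμ) zero_le⟩
  rw [ae_iff]; exact h

private lemma polyInt (μ : Measure ℝ) (hmom : ∀ n : ℕ, Integrable (fun x : ℝ => |x| ^ n) μ)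
    (f : Polynomial ℝ) : Integrable (fun x => f.eval x) μ := by
  induction f using Polynomial.induction_on' with
  | add p q hp hq => simp only [eval_add]; exact hp.add hq
  | monomial k c =>
      have h1 : Integrable (fun x : ℝ => x ^ k) μ := by
        refine (hmom k).mono' ((continuous_pow k).aestronglyMeasurable) ?_
        filter_upwards with x
        simp [abs_pow]
      simpa [eval_monomial] using h1.const_mul c

private lemma orthLower (μ : Measure ℝ) (p : ℕ → Polynomial ℝ)
    (hdeg : ∀ k, (p k).natDegree = k) (hlead : ∀ k, 0 < (p k).leadingCoeff)
    (horth : ∀ k m, ∫ x, (p k).eval x * (p m).eval x ∂μ = if k = m then 1 else 0)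
    (hint : ∀ f : Polynomial ℝ, Integrable (fun x => f.eval x) μ) :
    ∀ (k : ℕ) (g : Polynomial ℝ), g.degree < (k : ℕ) → ∫ x, ((p k) * g).eval x ∂μ = 0 := by
  have hpne : ∀ j, p j ≠ 0 := by
    intro j h
    have := hlead j
    rw [h] at this
    simp at this
  have Jc : ∀ (c : ℝ) (f : Polynomial ℝ),
      ∫ x, (C c * f).eval x ∂μ = c * ∫ x, f.eval x ∂μ := by
    intro c f
    simp only [eval_mul, eval_C]
    exact integral_const_mul c _
  have JONB : ∀ k m, ∫ x, (p k * p m).eval x ∂μ = if k = m then 1 else 0 := by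
    intro k m
    simp only [eval_mul]
    exact horth k m
  have key : ∀ (m : ℕ) (k : ℕ) (g : Polynomial ℝ), g.natDegree ≤ m → g.degree < (k : ℕ) →
      ∫ x, ((p k) * g).eval x ∂μ = 0 := by
    intro m
    induction m with
    | zero =>
      intro k g hdg hlt
      by_cases hg : g = 0
      · simp [hg]
      · have hk0 : k ≠ 0 := by
          rintro rfl
          have h0 : (0 : WithBot ℕ) ≤ g.degree := by
            rw [Polynomial.degree_eq_natDegree hg]
            exact_mod_cast Nat.zero_le _
          have : g.degree < (0 : WithBot ℕ) := by exact_mod_cast hlt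
          exact absurd (lt_of_le_of_lt h0 this) (lt_irrefl _)
        set γ := (p 0).leadingCoeff with hγdef
        have hγ0 : γ ≠ 0 := ne_of_gt (hlead 0)
        have hp0c : (p 0).coeff 0 = γ := by rw [hγdef, Polynomial.leadingCoeff, hdeg 0]
        have hp0 : p 0 = C γ := by
          rw [← hp0c]
          exact Polynomial.eq_C_of_natDegree_eq_zero (hdeg 0)
        set c := g.coeff 0 with hc
        have hgC : g = C c := Polynomial.eq_C_of_natDegree_eq_zero (Nat.le_zero.mp hdg)
        have hid : p k * g = C (c / γ) * (p k * p 0) := by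
          rw [hgC, hp0, show C (c / γ) * (p k * C γ) = p k * (C (c / γ) * C γ) from by ring,
            ← C_mul, div_mul_cancel₀ _ hγ0]
        simp only [hid]
        rw [Jc, JONB, if_neg hk0, mul_zero]
    | succ m ih =>
      intro k g hdg hlt
      by_cases hgm : g.natDegree ≤ m
      · exact ih k g hgm hlt
      · have hnd : g.natDegree = m + 1 := le_antisymm hdg (not_le.1 hgm)
        have hg : g ≠ 0 := fun h => by simp [h] at hnd
        have hdg' : g.degree = ((m + 1 : ℕ) : WithBot ℕ) := by
          rw [Polynomial.degree_eq_natDegree hg, hnd]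
        have hjk : k ≠ m + 1 := by
          intro h
          rw [h, hdg'] at hlt
          exact absurd hlt (lt_irrefl _)
        set γ := (p (m+1)).leadingCoeff with hγdef
        have hγ0 : γ ≠ 0 := ne_of_gt (hlead (m+1))
        set c := g.leadingCoeff / γ with hcdef
        have hc0 : c ≠ 0 := div_ne_zero (Polynomial.leadingCoeff_ne_zero.2 hg) hγ0
        have hdegc : g.degree = (C c * p (m+1)).degree := by
          rw [Polynomial.degree_mul, Polynomial.degree_C hc0, zero_add,
            Polynomial.degree_eq_natDegree (hpne (m+1)), hdeg, hdg']
        have hlc : g.leadingCoeff = (C c * p (m+1)).leadingCoeff := by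
          rw [Polynomial.leadingCoeff_mul, Polynomial.leadingCoeff_C, hcdef,
            div_mul_cancel₀ _ hγ0]
        have hsub : (g - C c * p (m+1)).degree < g.degree :=
          Polynomial.degree_sub_lt hdegc hg hlc
        set g' := g - C c * p (m+1) with hg'def
        have hg'nd : g'.natDegree ≤ m := by
          by_cases h0 : g' = 0
          · simp [h0]
          · have h2 : g'.natDegree < g.natDegree := Polynomial.natDegree_lt_natDegree h0 hsub
            omega
        have hg'lt : g'.degree < (k : ℕ) := lt_trans hsub hlt
        have hid : p k * g = p k * g' + C c * (p k * p (m+1)) := by rw [hg'def]; ring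
        simp only [hid, eval_add]
        rw [integral_add (hint _) (hint _), ih k g' hg'nd hg'lt, Jc, JONB, if_neg hjk,
          mul_zero, add_zero]
  intro k g h
  exact key g.natDegree k g le_rfl h

private lemma sqrtCS {x y : ℝ} (hx0 : 0 ≤ x) (hx1 : x ≤ 1) (hy0 : 0 ≤ y) (hy1 : y ≤ 1) :
    Real.sqrt ((1 - x) * (1 - y)) + Real.sqrt (x * y) ≤ 1 := by
  rw [Real.sqrt_mul (by linarith), Real.sqrt_mul hx0]
  nlinarith [Real.sq_sqrt hx0, Real.sq_sqrt hy0,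
    Real.sq_sqrt (by linarith : (0:ℝ) ≤ 1 - x), Real.sq_sqrt (by linarith : (0:ℝ) ≤ 1 - y),
    sq_nonneg (Real.sqrt (1 - x) - Real.sqrt (1 - y)),
    sq_nonneg (Real.sqrt x - Real.sqrt y),
    Real.sqrt_nonneg (1 - x), Real.sqrt_nonneg (1 - y),
    Real.sqrt_nonneg x, Real.sqrt_nonneg y]

private lemma st4aux {aa d δ : ℝ} (haa : 0 < aa) (hdpos : 0 < d) (hδpos : 0 < δ)
    (hδd : δ < d) (hs2 : (1:ℝ) ≤ Real.sqrt 2) (hδeq : δ * (d + Real.sqrt 2 * aa) = d ^ 2) :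
    aa * δ ≤ d ^ 2 - δ ^ 2 := by
  nlinarith [mul_nonneg (mul_nonneg (sub_nonneg.2 hs2) haa.le) hδpos.le,
    mul_pos hδpos (sub_pos.2 hδd)]

set_option maxHeartbeats 2000000 in
/-- Theorem 1: if `d = dist(x₀, supp μ) > 0` and `δ_n = d²/(d + √2 a_{n+1})`, then
at least one of `p_n`, `p_{n+1}` has no zeros in `(x₀ − δ_n, x₀ + δ_n)`. -/
theorem stmt_6 (μ : Measure ℝ)
    (hmom : ∀ n : ℕ, Integrable (fun x : ℝ => |x| ^ n) μ)
    (hcpt : IsCompact (measSupport μ))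
    (hinf : (measSupport μ).Infinite)
    (p : ℕ → Polynomial ℝ) (a b : ℕ → ℝ)
    (ha : ∀ k, 0 < a k)
    (hdeg : ∀ k, (p k).natDegree = k)
    (hlead : ∀ k, 0 < (p k).leadingCoeff)
    (horth : ∀ k m, ∫ x, (p k).eval x * (p m).eval x ∂μ = if k = m then 1 else 0)
    (hrec : ∀ k x, x * (p k).eval x
      = a (k + 1) * (p (k + 1)).eval x + b (k + 1) * (p k).eval x
        + (if k = 0 then 0 else a k * (p (k - 1)).eval x))
    (x₀ : ℝ) (hx₀ : x₀ ∉ measSupport μ)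
    (d : ℝ) (hd : d = Metric.infDist x₀ (measSupport μ)) (hdpos : 0 < d)
    (n : ℕ) (δ : ℝ) (hδ : δ = d ^ 2 / (d + Real.sqrt 2 * a (n + 1))) :
    (∀ x ∈ Set.Ioo (x₀ - δ) (x₀ + δ), (p n).eval x ≠ 0) ∨
    (∀ x ∈ Set.Ioo (x₀ - δ) (x₀ + δ), (p (n + 1)).eval x ≠ 0) := by
  have hpne : ∀ j, p j ≠ 0 := by
    intro j h
    have := hlead j
    rw [h] at this
    simp at this
  -- dispose of the case n = 0
  rcases Nat.eq_zero_or_pos n with hn0 | hn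
  · left
    intro x _
    subst hn0
    have h0 : (p 0).natDegree = 0 := hdeg 0
    have hC := Polynomial.eq_C_of_natDegree_eq_zero h0
    have hlc : (p 0).coeff 0 = (p 0).leadingCoeff := by
      rw [Polynomial.leadingCoeff, h0]
    rw [hC, eval_C, hlc]
    exact ne_of_gt (hlead 0)
  -- main case : suppose both p n and p (n+1) have zeros in the interval
  by_contra hcon
  push_neg at hcon
  obtain ⟨⟨z, hz, hpz⟩, ⟨w, hw, hqw⟩⟩ := hcon
  have hint : ∀ f : Polynomial ℝ, Integrable (fun x => f.eval x) μ := polyInt μ hmom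
  have Jorth := orthLower μ p hdeg hlead horth hint
  -- basic scalars
  set aa := a (n + 1) with haadef
  have haa : 0 < aa := ha (n + 1)
  have hs2 : (1 : ℝ) ≤ Real.sqrt 2 := by
    calc (1:ℝ) = Real.sqrt 1 := Real.sqrt_one.symm
      _ ≤ Real.sqrt 2 := Real.sqrt_le_sqrt (by norm_num)
  have hs2pos : (0:ℝ) < Real.sqrt 2 := lt_of_lt_of_le one_pos hs2
  have hden : 0 < d + Real.sqrt 2 * aa := by
    have := mul_pos hs2pos haa
    linarith
  have hδpos : 0 < δ := by rw [hδ]; exact div_pos (by positivity) hden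
  have hδd : δ < d := by
    rw [hδ, div_lt_iff₀ hden]
    have h1 := mul_pos hdpos (mul_pos hs2pos haa)
    linarith [h1]
  have hδeq : δ * (d + Real.sqrt 2 * aa) = d ^ 2 := by
    rw [hδ]
    field_simp
  -- the a.e. lower bound
  have hdmem : ∀ᵐ x ∂μ, d ^ 2 ≤ (x - x₀) ^ 2 := by
    filter_upwards [measSupport_ae μ] with x hx
    have h1 : d ≤ dist x₀ x := hd ▸ Metric.infDist_le_dist_of_mem hx
    have h2 : d ≤ |x - x₀| := by rwa [Real.dist_eq, abs_sub_comm] at h1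
    calc d ^ 2 ≤ |x - x₀| ^ 2 := pow_le_pow_left₀ hdpos.le h2 2
      _ = (x - x₀) ^ 2 := sq_abs _
  -- integral helpers
  have Jadd : ∀ f g : Polynomial ℝ,
      ∫ x, (f + g).eval x ∂μ = (∫ x, f.eval x ∂μ) + ∫ x, g.eval x ∂μ := by
    intro f g
    simp only [eval_add]
    exact integral_add (hint f) (hint g)
  have Jc : ∀ (c : ℝ) (f : Polynomial ℝ),
      ∫ x, (C c * f).eval x ∂μ = c * ∫ x, f.eval x ∂μ := by
    intro c f
    simp only [eval_mul, eval_C]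
    exact integral_const_mul c _
  have Jsq : ∀ f : Polynomial ℝ, 0 ≤ ∫ x, (f * f).eval x ∂μ := by
    intro f
    refine integral_nonneg fun x => ?_
    simp only [eval_mul]
    exact mul_self_nonneg _
  have Jmom : ∀ f : Polynomial ℝ,
      d ^ 2 * ∫ x, (f * f).eval x ∂μ ≤ ∫ x, ((X - C x₀) ^ 2 * (f * f)).eval x ∂μ := by
    intro f
    rw [← integral_const_mul]
    refine integral_mono_ae ((hint (f * f)).const_mul _) (hint _) ?_
    filter_upwards [hdmem] with x hx
    simp only [eval_mul, eval_pow, eval_sub, eval_X, eval_C]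
    exact mul_le_mul_of_nonneg_right hx (mul_self_nonneg _)
  -- leading coefficient recursion
  have hrecp : (X : Polynomial ℝ) * p n
      = C (a (n + 1)) * p (n + 1) + C (b (n + 1)) * p n + C (a n) * p (n - 1) := by
    apply Polynomial.funext
    intro x
    simp only [eval_add, eval_mul, eval_C, eval_X]
    rw [hrec n x, if_neg (Nat.pos_iff_ne_zero.mp hn)]
  have hγ : (p n).leadingCoeff = aa * (p (n + 1)).leadingCoeff := by
    have hco := congrArg (fun f : Polynomial ℝ => f.coeff (n + 1)) hrecp
    simp only [Polynomial.coeff_add, Polynomial.coeff_C_mul, Polynomial.coeff_X_mul] at hco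
    have hz1 : (p n).coeff (n + 1) = 0 :=
      Polynomial.coeff_eq_zero_of_natDegree_lt (by rw [hdeg]; omega)
    have hz2 : (p (n - 1)).coeff (n + 1) = 0 :=
      Polynomial.coeff_eq_zero_of_natDegree_lt (by rw [hdeg]; omega)
    have h1 : (p n).coeff n = (p n).leadingCoeff := by rw [Polynomial.leadingCoeff, hdeg]
    have h2 : (p (n+1)).coeff (n+1) = (p (n+1)).leadingCoeff := by
      rw [Polynomial.leadingCoeff, hdeg]
    rw [hz1, hz2, h1, h2] at hco
    rw [hco]
    ring
  -- factorizations
  obtain ⟨q, hq⟩ := Polynomial.dvd_iff_isRoot.2 hpz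
  obtain ⟨r, hr⟩ := Polynomial.dvd_iff_isRoot.2 hqw
  have hqne : q ≠ 0 := by
    intro h
    exact hpne n (by rw [hq, h, mul_zero])
  have hrne : r ≠ 0 := by
    intro h
    exact hpne (n+1) (by rw [hr, h, mul_zero])
  have hqnat : 1 + q.natDegree = n := by
    have h1 := hdeg n
    rw [hq, Polynomial.natDegree_mul (Polynomial.X_sub_C_ne_zero z) hqne,
      Polynomial.natDegree_X_sub_C] at h1
    exact h1
  have hrnat : r.natDegree = n := by
    have h1 := hdeg (n+1)
    rw [hr, Polynomial.natDegree_mul (Polynomial.X_sub_C_ne_zero w) hrne,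
      Polynomial.natDegree_X_sub_C] at h1
    omega
  have hqdeg : q.degree < (n : ℕ) := by
    calc q.degree ≤ (q.natDegree : WithBot ℕ) := Polynomial.degree_le_natDegree
      _ < ((n : ℕ) : WithBot ℕ) := by exact_mod_cast (by omega : q.natDegree < n)
  have hqdeg' : q.degree < ((n + 1 : ℕ) : WithBot ℕ) :=
    lt_trans hqdeg (by exact_mod_cast n.lt_succ_self)
  have hrdeg : r.degree < ((n + 1 : ℕ) : WithBot ℕ) := by
    calc r.degree ≤ (r.natDegree : WithBot ℕ) := Polynomial.degree_le_natDegree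
      _ < ((n + 1 : ℕ) : WithBot ℕ) := by exact_mod_cast (by omega : r.natDegree < n + 1)
  have hrlc : r.leadingCoeff = (p (n+1)).leadingCoeff := by
    rw [hr, Polynomial.leadingCoeff_mul, (Polynomial.monic_X_sub_C w).leadingCoeff, one_mul]
  -- normalization : aa * ∫ pn r = 1
  have hpn2 : ∫ x, (p n * p n).eval x ∂μ = 1 := by
    simp only [eval_mul]
    simpa using horth n n
  have hpn12 : ∫ x, (p (n+1) * p (n+1)).eval x ∂μ = 1 := by
    simp only [eval_mul]
    simpa using horth (n+1) (n+1)
  have hpnpn1 : ∫ x, (p n * p (n+1)).eval x ∂μ = 0 := by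
    simp only [eval_mul]
    simpa [Nat.ne_of_lt n.lt_succ_self] using horth n (n+1)
  have hsubdeg : (p n - C aa * r).degree < ((n : ℕ) : WithBot ℕ) := by
    have h1 : (p n).degree = (C aa * r).degree := by
      rw [Polynomial.degree_mul, Polynomial.degree_C haa.ne', zero_add,
        Polynomial.degree_eq_natDegree hrne, hrnat, Polynomial.degree_eq_natDegree (hpne n),
        hdeg]
    have h2 : (p n).leadingCoeff = (C aa * r).leadingCoeff := by
      rw [Polynomial.leadingCoeff_mul, Polynomial.leadingCoeff_C, hrlc]
      exact hγ
    have h3 := Polynomial.degree_sub_lt h1 (hpne n) h2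
    rwa [Polynomial.degree_eq_natDegree (hpne n), hdeg] at h3
  have h30 : ∫ x, (p n * (p n - C aa * r)).eval x ∂μ = 0 := Jorth n _ hsubdeg
  have hpnr : aa * ∫ x, (p n * r).eval x ∂μ = 1 := by
    have e3 : p n * p n = p n * (p n - C aa * r) + C aa * (p n * r) := by ring
    have h := Jadd (p n * (p n - C aa * r)) (C aa * (p n * r))
    rw [← e3, hpn2, h30, Jc, zero_add] at h
    exact h.symm
  -- T relation
  set T := ∫ x, (q * r).eval x ∂μ with hTdef
  have e6 : p n * r = p (n+1) * q + C (w - z) * (q * r) := by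
    rw [hq, hr, C_sub]
    ring
  have hq_orth : ∫ x, (p (n+1) * q).eval x ∂μ = 0 := Jorth (n+1) q hqdeg'
  have hTrel : (∫ x, (p n * r).eval x ∂μ) = (w - z) * T := by
    have h := Jadd (p (n+1) * q) (C (w - z) * (q * r))
    rw [← e6, hq_orth, Jc, zero_add] at h
    exact h
  have hmain6 : aa * ((w - z) * T) = 1 := by rw [← hTrel]; exact hpnr
  -- scalar abbreviations
  set A := z - x₀ with hAdef
  set B := w - x₀ with hBdef
  have hCA : (C A : Polynomial ℝ) = C z - C x₀ := by rw [hAdef, C_sub]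
  have hCB : (C B : Polynomial ℝ) = C w - C x₀ := by rw [hBdef, C_sub]
  set E := ∫ x, (q * q).eval x ∂μ with hEdef
  set Fv := ∫ x, (r * r).eval x ∂μ with hFdef
  have hJpnq : ∫ x, (p n * q).eval x ∂μ = 0 := Jorth n q hqdeg
  have hJpn1r : ∫ x, (p (n+1) * r).eval x ∂μ = 0 := Jorth (n+1) r hrdeg
  -- second moment expansions
  have id1 : (X - C x₀) ^ 2 * (q * q)
      = p n * p n + C A * (p n * q) + C A * (p n * q) + C A * (C A * (q * q)) := by
    rw [hCA, hq]
    ring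
  have hq2 : ∫ x, ((X - C x₀) ^ 2 * (q * q)).eval x ∂μ = 1 + A ^ 2 * E := by
    simp only [id1]
    rw [Jadd, Jadd, Jadd, Jc, Jc, Jc, hpn2, hJpnq]
    ring
  have id2 : (X - C x₀) ^ 2 * (r * r)
      = p (n+1) * p (n+1) + C B * (p (n+1) * r) + C B * (p (n+1) * r)
        + C B * (C B * (r * r)) := by
    rw [hCB, hr]
    ring
  have hr2 : ∫ x, ((X - C x₀) ^ 2 * (r * r)).eval x ∂μ = 1 + B ^ 2 * Fv := by
    simp only [id2]
    rw [Jadd, Jadd, Jadd, Jc, Jc, Jc, hpn12, hJpn1r]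
    ring
  have id3 : (X - C x₀) ^ 2 * (q * r)
      = p n * p (n+1) + C B * (p n * r) + C A * (p (n+1) * q) + C A * (C B * (q * r)) := by
    rw [hCA, hCB, hq, hr]
    ring
  have hwz : w - z = B - A := by rw [hAdef, hBdef]; ring
  have hcross : ∫ x, ((X - C x₀) ^ 2 * (q * r)).eval x ∂μ = B ^ 2 * T := by
    simp only [id3]
    rw [Jadd, Jadd, Jadd, Jc, Jc, Jc, Jc, hpnpn1, hTrel, hq_orth, hwz]
    ring
  -- the two quadratics
  have hEnn : 0 ≤ E := Jsq q
  have hFnn : 0 ≤ Fv := Jsq r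
  have hE1 : (d ^ 2 - A ^ 2) * E ≤ 1 := by
    have h := Jmom q
    rw [hq2] at h
    linarith [h]
  have hF1 : (d ^ 2 - B ^ 2) * Fv ≤ 1 := by
    have h := Jmom r
    rw [hr2] at h
    linarith [h]
  have hquad1 : ∀ l : ℝ, 0 ≤ E * (l * l) + (2 * T) * l + Fv := by
    intro l
    have h := Jsq (C l * q + r)
    have idq : (C l * q + r) * (C l * q + r)
        = C l * (C l * (q * q)) + C l * (q * r) + C l * (q * r) + r * r := by ring
    rw [idq] at h
    rw [Jadd, Jadd, Jadd, Jc, Jc, Jc] at h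
    rw [← hEdef, ← hFdef, ← hTdef] at h
    linarith [h]
  have hCS : T ^ 2 ≤ E * Fv := by
    have h := discrim_le_zero hquad1
    rw [discrim] at h
    linarith [h]
  have hquad2 : ∀ l : ℝ, 0 ≤ (1 - (d ^ 2 - A ^ 2) * E) * (l * l)
      + (-(2 * (d ^ 2 - B ^ 2) * T)) * l + (1 - (d ^ 2 - B ^ 2) * Fv) := by
    intro l
    have hm := Jmom (C l * q + r)
    have idq : (C l * q + r) * (C l * q + r)
        = C l * (C l * (q * q)) + C l * (q * r) + C l * (q * r) + r * r := by ring
    have idbig : (X - C x₀) ^ 2 * ((C l * q + r) * (C l * q + r))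
        = C l * (C l * ((X - C x₀) ^ 2 * (q * q))) + C l * ((X - C x₀) ^ 2 * (q * r))
          + C l * ((X - C x₀) ^ 2 * (q * r)) + (X - C x₀) ^ 2 * (r * r) := by ring
    rw [idbig, idq] at hm
    rw [Jadd, Jadd, Jadd, Jc, Jc, Jc] at hm
    rw [Jadd, Jadd, Jadd, Jc, Jc, Jc, hq2, hcross, hr2] at hm
    rw [← hEdef, ← hFdef, ← hTdef] at hm
    linarith [hm]
  have hPSD : ((d ^ 2 - B ^ 2) * T) ^ 2
      ≤ (1 - (d ^ 2 - A ^ 2) * E) * (1 - (d ^ 2 - B ^ 2) * Fv) := by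
    have h := discrim_le_zero hquad2
    rw [discrim] at h
    linarith [h]
  -- numeric endgame
  have hA2 : A ^ 2 < δ ^ 2 := sq_lt_sq' (by rw [hAdef]; linarith [hz.1]) (by rw [hAdef]; linarith [hz.2])
  have hB2 : B ^ 2 < δ ^ 2 := sq_lt_sq' (by rw [hBdef]; linarith [hw.1]) (by rw [hBdef]; linarith [hw.2])
  have hD0 : 0 < d ^ 2 - δ ^ 2 := by
    have h1 : 0 < (d - δ) * (d + δ) := mul_pos (by linarith) (by linarith)
    linarith [h1]
  have hPpos : 0 < d ^ 2 - A ^ 2 := by linarith [hA2, hD0]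
  have hRpos : 0 < d ^ 2 - B ^ 2 := by linarith [hB2, hD0]
  have hx1le : (d ^ 2 - A ^ 2) * E ≤ 1 := hE1
  have hy1le : (d ^ 2 - B ^ 2) * Fv ≤ 1 := hF1
  have hx1nn : 0 ≤ (d ^ 2 - A ^ 2) * E := mul_nonneg hPpos.le hEnn
  have hy1nn : 0 ≤ (d ^ 2 - B ^ 2) * Fv := mul_nonneg hRpos.le hFnn
  set x1 := (d ^ 2 - A ^ 2) * E with hx1def
  set y1 := (d ^ 2 - B ^ 2) * Fv with hy1def
  have st1 : (d ^ 2 - B ^ 2) * |T| ≤ Real.sqrt ((1 - x1) * (1 - y1)) := by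
    rw [Real.le_sqrt (by positivity) (by linarith [hPSD, sq_nonneg ((d ^ 2 - B ^ 2) * T)])]
    calc ((d ^ 2 - B ^ 2) * |T|) ^ 2 = ((d ^ 2 - B ^ 2) * T) ^ 2 := by
          rw [mul_pow, mul_pow, sq_abs]
      _ ≤ (1 - x1) * (1 - y1) := hPSD
  have st2 : Real.sqrt ((d ^ 2 - A ^ 2) * (d ^ 2 - B ^ 2)) * |T| ≤ Real.sqrt (x1 * y1) := by
    have h1 : (d ^ 2 - A ^ 2) * (d ^ 2 - B ^ 2) * T ^ 2 ≤ x1 * y1 := by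
      have h2 := mul_le_mul_of_nonneg_left hCS (mul_pos hPpos hRpos).le
      rw [hx1def, hy1def]
      linarith [h2]
    calc Real.sqrt ((d ^ 2 - A ^ 2) * (d ^ 2 - B ^ 2)) * |T|
        = Real.sqrt ((d ^ 2 - A ^ 2) * (d ^ 2 - B ^ 2) * T ^ 2) := by
          rw [Real.sqrt_mul (mul_nonneg hPpos.le hRpos.le) (T ^ 2), Real.sqrt_sq_eq_abs]
      _ ≤ Real.sqrt (x1 * y1) := Real.sqrt_le_sqrt h1
  have st3 : Real.sqrt ((1 - x1) * (1 - y1)) + Real.sqrt (x1 * y1) ≤ 1 :=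
    sqrtCS hx1nn hx1le hy1nn hy1le
  have st4 : aa * δ ≤ d ^ 2 - δ ^ 2 := st4aux haa hdpos hδpos hδd hs2 hδeq
  have st5 : d ^ 2 - δ ^ 2 ≤ Real.sqrt ((d ^ 2 - A ^ 2) * (d ^ 2 - B ^ 2)) := by
    rw [Real.le_sqrt hD0.le (by positivity), sq]
    exact mul_le_mul (by linarith [hA2]) (by linarith [hB2]) hD0.le (by linarith [hA2, hD0])
  have hTne : T ≠ 0 := by
    intro h
    rw [h, mul_zero, mul_zero] at hmain6
    exact zero_ne_one hmain6
  have habsT : 0 < |T| := abs_pos.2 hTne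
  have hwz2 : |w - z| < 2 * δ := by
    rw [hwz]
    calc |B - A| ≤ |B| + |A| := abs_sub _ _
      _ < 2 * δ := by
          have h1 : |A| < δ := abs_lt.2 ⟨by rw [hAdef]; linarith [hz.1], by rw [hAdef]; linarith [hz.2]⟩
          have h2 : |B| < δ := abs_lt.2 ⟨by rw [hBdef]; linarith [hw.1], by rw [hBdef]; linarith [hw.2]⟩
          linarith
  have hchain : (1 : ℝ) ≤ aa * (|w - z| * |T|) := by
    have h1 : (1 : ℝ) = |aa * ((w - z) * T)| := by rw [hmain6, abs_one]
    rw [h1, abs_mul, abs_mul, abs_of_pos haa]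
  have hlt1 : aa * (|w - z| * |T|) < aa * ((2 * δ) * |T|) :=
    mul_lt_mul_of_pos_left (mul_lt_mul_of_pos_right hwz2 habsT) haa
  have hle2 : aa * ((2 * δ) * |T|)
      ≤ ((d ^ 2 - B ^ 2) + Real.sqrt ((d ^ 2 - A ^ 2) * (d ^ 2 - B ^ 2))) * |T| := by
    have h1 : aa * (2 * δ) ≤ (d ^ 2 - B ^ 2) + Real.sqrt ((d ^ 2 - A ^ 2) * (d ^ 2 - B ^ 2)) := by
      linarith [st4, st5, hB2]
    calc aa * ((2 * δ) * |T|) = (aa * (2 * δ)) * |T| := by ring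
      _ ≤ _ := mul_le_mul_of_nonneg_right h1 (abs_nonneg T)
  have hle3 : ((d ^ 2 - B ^ 2) + Real.sqrt ((d ^ 2 - A ^ 2) * (d ^ 2 - B ^ 2))) * |T| ≤ 1 := by
    have e1 : ((d ^ 2 - B ^ 2) + Real.sqrt ((d ^ 2 - A ^ 2) * (d ^ 2 - B ^ 2))) * |T|
        = (d ^ 2 - B ^ 2) * |T| + Real.sqrt ((d ^ 2 - A ^ 2) * (d ^ 2 - B ^ 2)) * |T| := by ring
    rw [e1]
    calc (d ^ 2 - B ^ 2) * |T| + Real.sqrt ((d ^ 2 - A ^ 2) * (d ^ 2 - B ^ 2)) * |T|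
        ≤ Real.sqrt ((1 - x1) * (1 - y1)) + Real.sqrt (x1 * y1) := add_le_add st1 st2
      _ ≤ 1 := st3
  linarith
end
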